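/- R_0 equals the frontier Fr_{S_u}(f_u⁻¹(0)) of the fiber f_u⁻¹(0) in S_u and is connected; likewise L_1 equals the frontier Fr_{S_u}(f_u⁻¹(1)) of f_u⁻¹(1) in S_u and is connected. -/

import Mathlib

open Set Topology

noncomputable section

/-- A set is an `Fσ` set if it is a countable union of closed sets. -/
def IsFSigma {X : Type*} [TopologicalSpace X] (s : Set X) : Prop :=
  ∃ F : ℕ → Set X, (∀ n, IsClosed (F n)) ∧ s = ⋃ n, F n

/-- A topological space is an `F`-space if any two disjoint open `Fσ` subsets
have disjoint closures. -/
def IsFSpace (X : Type*) [TopologicalSpace X] : Prop :=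
  ∀ s t : Set X, IsOpen s → IsOpen t → IsFSigma s → IsFSigma t → Disjoint s t →
    Disjoint (closure s) (closure t)

/-- `𝐒 = ℕ × [0,1]²` where `ℕ` is discrete and `[0,1]` is the unit interval. -/
abbrev bS : Type := ℕ × (unitInterval × unitInterval)

/-- `βπ : β𝐒 → βℕ`, the Stone–Čech extension of the projection `π(n,x,y) = n`. -/
def betaPi : StoneCech bS → StoneCech ℕ :=
  stoneCechExtend (continuous_stoneCechUnit.comp continuous_fst)

/-- `βf : β𝐒 → [0,1]`, the Stone–Čech extension of `f(n,x,y) = x`. -/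
def betaF : StoneCech bS → unitInterval :=
  stoneCechExtend (continuous_fst.comp continuous_snd)

/-- `S_u = βπ⁻¹(u)`, as a subset of `β𝐒` (carrying the subspace topology). -/
def Su (u : StoneCech ℕ) : Set (StoneCech bS) := betaPi ⁻¹' {u}

/-- `f_u : S_u → [0,1]`, the restriction of `βf` to `S_u`. -/
def fu (u : StoneCech ℕ) : (Su u) → unitInterval := fun z => betaF z.1

/-- `L_t = f_u⁻¹(t) ∩ cl_{S_u} f_u⁻¹([0,t))`. -/
def Lset (u : StoneCech ℕ) (t : unitInterval) : Set (Su u) :=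
  fu u ⁻¹' {t} ∩ closure (fu u ⁻¹' (Set.Ico 0 t))

/-- `R_t = f_u⁻¹(t) ∩ cl_{S_u} f_u⁻¹((t,1])`. -/
def Rset (u : StoneCech ℕ) (t : unitInterval) : Set (Su u) :=
  fu u ⁻¹' {t} ∩ closure (fu u ⁻¹' (Set.Ioc t 1))

/-- The rectangle `P_{s,r} = S_u ∩ cl_{β𝐒}(ℕ × [s,r] × I)`, viewed as a subset of `S_u`. -/
def Pset (u : StoneCech ℕ) (s r : unitInterval) : Set (Su u) :=
  Subtype.val ⁻¹' closure (stoneCechUnit '' {p : bS | p.2.1 ∈ Set.Icc s r})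

/-- `L_{s,t} = cl_{S_u}(⋃_{s<r<t} P_{s,r})`. -/
def Lst (u : StoneCech ℕ) (s t : unitInterval) : Set (Su u) :=
  closure (⋃ r ∈ Set.Ioo s t, Pset u s r)

/-- The interior of `B` in the subspace `A`, viewed as a subset of the ambient space. -/
def relInt {Y : Type*} [TopologicalSpace Y] (A B : Set Y) : Set Y :=
  Subtype.val '' interior ((Subtype.val : A → Y) ⁻¹' B)

/-- The transfinite sequence `X_α ⊆ S_u`: `X_0 = S_u`,
`X_{α+1} = X_α \ ⋃_{t} Int_{X_α}(X_α ∩ f_u⁻¹(t))`, and `X_λ = ⋂_{β<λ} X_β` at limits. -/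
def Xseq (u : StoneCech ℕ) : Ordinal → Set (Su u) := fun α =>
  Ordinal.limitRecOn α Set.univ
    (fun _ Xa => Xa \ ⋃ t : unitInterval, relInt Xa (Xa ∩ fu u ⁻¹' {t}))
    (fun o _ ih => ⋂ (β : {β : Ordinal // β < o}), ih β.1 β.2)

/-- The bottom line `B_u = S_u ∩ cl_{β𝐒}(ℕ × I × {0})`, viewed as a subset of `S_u`. -/
def Bu (u : StoneCech ℕ) : Set (Su u) :=
  Subtype.val ⁻¹' closure (stoneCechUnit '' {p : bS | p.2.2 = 0})

/-- The top line `T_u = S_u ∩ cl_{β𝐒}(ℕ × I × {1})`, viewed as a subset of `S_u`. -/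
def Tu (u : StoneCech ℕ) : Set (Su u) :=
  Subtype.val ⁻¹' closure (stoneCechUnit '' {p : bS | p.2.2 = 1})

/-! ### Auxiliary lemmas -/

lemma IsFSigma.inter' {X : Type*} [TopologicalSpace X] {s t : Set X}
    (hs : IsFSigma s) (ht : IsFSigma t) : IsFSigma (s ∩ t) := by
  obtain ⟨F, hF, rfl⟩ := hs
  obtain ⟨G, hG, rfl⟩ := ht
  refine ⟨fun n => F (Nat.unpair n).1 ∩ G (Nat.unpair n).2,
    fun n => (hF _).inter (hG _), ?_⟩
  ext x
  simp only [Set.mem_inter_iff, Set.mem_iUnion]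
  constructor
  · rintro ⟨⟨i, hi⟩, ⟨j, hj⟩⟩
    exact ⟨Nat.pair i j, by simpa [Nat.unpair_pair] using And.intro hi hj⟩
  · rintro ⟨n, hx1, hx2⟩
    exact ⟨⟨_, hx1⟩, ⟨_, hx2⟩⟩

lemma isFSigma_lt {X : Type*} [TopologicalSpace X] {G : X → ℝ} (hG : Continuous G) (a : ℝ) :
    IsFSigma {x | G x < a} := by
  refine ⟨fun n => G ⁻¹' Set.Iic (a - 1/(n+1)), fun n => isClosed_Iic.preimage hG, ?_⟩
  ext x
  simp only [Set.mem_setOf_eq, Set.mem_iUnion, Set.mem_preimage, Set.mem_Iic]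
  constructor
  · intro h
    obtain ⟨n, hn⟩ := exists_nat_one_div_lt (sub_pos.mpr h)
    exact ⟨n, by linarith⟩
  · rintro ⟨n, hn⟩
    have h1 : (0:ℝ) < 1/(n+1) := by positivity
    linarith

lemma isFSigma_gt {X : Type*} [TopologicalSpace X] {G : X → ℝ} (hG : Continuous G) (a : ℝ) :
    IsFSigma {x | a < G x} := by
  have h : {x | a < G x} = {x | (fun y => -G y) x < -a} := by
    ext x; simp only [Set.mem_setOf_eq]; constructor <;> intro h <;> linarith
  rw [h]
  exact isFSigma_lt hG.neg (-a)

/-- The key abstract connectedness lemma. -/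
lemma key_conn {X : Type*} [TopologicalSpace X] [CompactSpace X] [T2Space X]
    (hFsp : IsFSpace X)
    (f : X → unitInterval) (hf : Continuous f) (hsurj : Function.Surjective f)
    (C : unitInterval → unitInterval → Set X)
    (hCconn : ∀ s r : unitInterval, s < r → IsConnected (C s r))
    (hCsub : ∀ s r : unitInterval, C s r ⊆ f ⁻¹' Set.Icc s r)
    (hCmono : ∀ s s' r r' : unitInterval, s' ≤ s → r ≤ r' → C s r ⊆ C s' r')
    (hCmem : ∀ (s r : unitInterval) (z : X), s < f z → f z < r → z ∈ C s r) :
    IsConnected (f ⁻¹' {0} ∩ closure (f ⁻¹' Set.Ioc 0 1)) := by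
  classical
  set F : X → ℝ := fun x => ((f x : ℝ)) with hFdef
  have hFc : Continuous F := continuous_subtype_val.comp hf
  have hF0 : ∀ x, 0 ≤ F x := fun x => (f x).2.1
  have hF1 : ∀ x, F x ≤ 1 := fun x => (f x).2.2
  have hfiber : f ⁻¹' {0} = F ⁻¹' {0} := by
    ext x
    simp only [Set.mem_preimage, Set.mem_singleton_iff]
    constructor
    · intro h; exact congrArg Subtype.val h
    · intro h; exact Subtype.ext h
  have hioc : f ⁻¹' Set.Ioc 0 1 = F ⁻¹' Set.Ioi 0 := by
    ext x
    simp only [Set.mem_preimage, Set.mem_Ioc, Set.mem_Ioi]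
    constructor
    · rintro ⟨h1, _⟩; exact Subtype.coe_lt_coe.mpr h1
    · intro h
      exact ⟨Subtype.coe_lt_coe.mp h, Subtype.coe_le_coe.mp (hF1 x)⟩
  rw [hfiber, hioc]
  have hepos : ∀ n : ℕ, (0:ℝ) < 1/(n+1) := fun n => by positivity
  have hele : ∀ n : ℕ, (1:ℝ)/(n+1) ≤ 1 := by
    intro n
    rw [div_le_one (by positivity)]
    have : (0:ℝ) ≤ n := Nat.cast_nonneg n
    linarith
  set K : ℕ → Set X := fun n => closure (F ⁻¹' Set.Ioc 0 (1/(n+1))) with hKdef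
  have hKclosed : ∀ n, IsClosed (K n) := fun n => isClosed_closure
  have hKcpt : ∀ n, IsCompact (K n) := fun n => (hKclosed n).isCompact
  have hKmono : ∀ n, K (n+1) ⊆ K n := by
    intro n
    apply closure_mono
    intro x hx
    refine ⟨hx.1, hx.2.trans ?_⟩
    apply one_div_le_one_div_of_le (by positivity)
    push_cast
    linarith
  have hKne : ∀ n, (K n).Nonempty := by
    intro n
    obtain ⟨x, hx⟩ := hsurj ⟨1/(n+1), (hepos n).le, hele n⟩
    have hFx : F x = 1/(n+1) := by rw [hFdef]; simp only; rw [hx]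
    exact ⟨x, subset_closure ⟨by rw [hFx]; exact hepos n, le_of_eq hFx⟩⟩
  have hcpre : ∀ S : Set ℝ, closure (F ⁻¹' S) ⊆ F ⁻¹' closure S :=
    fun S => hFc.closure_preimage_subset S
  set R : Set X := F ⁻¹' {0} ∩ closure (F ⁻¹' Set.Ioi 0) with hRdef
  have hReq : R = ⋂ n, K n := by
    apply Set.Subset.antisymm
    · rintro x ⟨hx0, hxc⟩
      refine Set.mem_iInter.mpr fun n => ?_
      have hsplit : F ⁻¹' Set.Ioi 0 ⊆ F ⁻¹' Set.Ioc 0 (1/(n+1)) ∪ F ⁻¹' Set.Ioi (1/(n+1)) := by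
        intro y hy
        rcases le_or_gt (F y) (1/(n+1)) with h | h
        · exact Or.inl ⟨hy, h⟩
        · exact Or.inr h
      have h2 := closure_mono hsplit hxc
      rw [closure_union] at h2
      rcases h2 with h | h
      · exact h
      · exfalso
        have h3 : F x ∈ closure (Set.Ioi ((1:ℝ)/(n+1))) := hcpre _ h
        rw [closure_Ioi] at h3
        have hx0' : F x = 0 := hx0
        have := hepos n
        rw [hx0'] at h3
        exact absurd h3 (not_le.mpr this)
    · intro x hx
      rw [Set.mem_iInter] at hx
      constructor
      · have h1 : ∀ n : ℕ, F x ≤ 1/(n+1) := by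
          intro n
          have h2 : F x ∈ closure (Set.Ioc (0:ℝ) (1/(n+1))) := hcpre _ (hx n)
          rw [closure_Ioc (hepos n).ne] at h2
          exact h2.2
        have h2 : F x ≤ 0 := by
          by_contra h
          push_neg at h
          obtain ⟨n, hn⟩ := exists_nat_one_div_lt h
          exact absurd (h1 n) (not_le.mpr hn)
        exact le_antisymm h2 (hF0 x)
      · exact closure_mono (fun y hy => hy.1) (hx 0)
  have hRclosed : IsClosed R := (isClosed_singleton.preimage hFc).inter isClosed_closure
  have hRne : R.Nonempty := by
    rw [hReq]
    exact IsCompact.nonempty_iInter_of_sequence_nonempty_isCompact_isClosed K hKmono hKne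
      (hKcpt 0) hKclosed
  refine ⟨hRne, ?_⟩
  rw [isPreconnected_iff_subset_of_fully_disjoint_closed hRclosed]
  intro u₀ v₀ hu₀ hv₀ hcover hdis
  by_contra hcon
  push_neg at hcon
  obtain ⟨hnu, hnv⟩ := hcon
  set A : Set X := R ∩ u₀ with hAdef
  set B : Set X := R ∩ v₀ with hBdef
  have hAne : A.Nonempty := by
    rcases Set.not_subset.mp hnv with ⟨x, hxR, hxv⟩
    exact ⟨x, hxR, (hcover hxR).resolve_right hxv⟩
  have hBne : B.Nonempty := by
    rcases Set.not_subset.mp hnu with ⟨x, hxR, hxu⟩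
    exact ⟨x, hxR, (hcover hxR).resolve_left hxu⟩
  have hABdis : Disjoint A B := hdis.mono Set.inter_subset_right Set.inter_subset_right
  have hAcl : IsClosed A := hRclosed.inter hu₀
  have hBcl : IsClosed B := hRclosed.inter hv₀
  obtain ⟨g, hg0, hg1, hg01⟩ := exists_continuous_zero_one_of_isClosed hAcl hBcl hABdis
  set U : Set X := {x | g x < 1/2} with hUdef
  set V : Set X := {x | 1/2 < g x} with hVdef
  have hUopen : IsOpen U := isOpen_lt g.continuous continuous_const
  have hVopen : IsOpen V := isOpen_lt continuous_const g.continuous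
  have hUV : Disjoint U V := by
    rw [Set.disjoint_left]
    intro x hx hx'
    have h1 : g x < 1/2 := hx
    have h2 : 1/2 < g x := hx'
    linarith
  have hAU : A ⊆ U := by
    intro x hx
    have : g x = 0 := hg0 hx
    simp only [hUdef, Set.mem_setOf_eq, this]
    norm_num
  have hBV : B ⊆ V := by
    intro x hx
    have : g x = 1 := hg1 hx
    simp only [hVdef, Set.mem_setOf_eq, this]
    norm_num
  have hRUV : R ⊆ U ∪ V := fun x hx =>
    (hcover hx).elim (fun h => Or.inl (hAU ⟨hx, h⟩)) (fun h => Or.inr (hBV ⟨hx, h⟩))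
  have hex : ∃ n, K n ⊆ U ∪ V := by
    by_contra hno
    push_neg at hno
    have hne' : (⋂ n, K n \ (U ∪ V)).Nonempty := by
      refine IsCompact.nonempty_iInter_of_sequence_nonempty_isCompact_isClosed _
        (fun n => Set.diff_subset_diff_left (hKmono n)) (fun n => ?_)
        ((hKcpt 0).diff (hUopen.union hVopen))
        (fun n => (hKclosed n).sdiff (hUopen.union hVopen))
      rcases Set.not_subset.mp (hno n) with ⟨x, hx1, hx2⟩
      exact ⟨x, hx1, hx2⟩
    obtain ⟨x, hx⟩ := hne'
    rw [Set.mem_iInter] at hx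
    have hxR : x ∈ R := by
      rw [hReq, Set.mem_iInter]
      exact fun n => (hx n).1
    exact (hx 0).2 (hRUV hxR)
  obtain ⟨n, hKn⟩ := hex
  set r : ℝ := 1/(n+1) with hrdef
  have hrpos : 0 < r := hepos n
  have hrle : r ≤ 1 := hele n
  set W : Set X := F ⁻¹' Set.Ioo 0 r with hWdef
  have hWsub : W ⊆ U ∪ V := fun x hx => hKn (subset_closure ⟨hx.1, hx.2.le⟩)
  have hWopen : IsOpen W := isOpen_Ioo.preimage hFc
  have hWfs : IsFSigma W := by
    have h1 : IsFSigma {x | 0 < F x} := isFSigma_gt hFc 0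
    have h2 : IsFSigma {x | F x < r} := isFSigma_lt hFc r
    have h3 : W = {x | 0 < F x} ∩ {x | F x < r} := by
      ext x
      simp only [hWdef, Set.mem_preimage, Set.mem_Ioo, Set.mem_inter_iff, Set.mem_setOf_eq]
    rw [h3]
    exact h1.inter' h2
  set U' : Set X := U ∩ W with hU'def
  set V' : Set X := V ∩ W with hV'def
  have hU'fs : IsFSigma U' := (isFSigma_lt g.continuous (1/2)).inter' hWfs
  have hV'fs : IsFSigma V' := (isFSigma_gt g.continuous (1/2)).inter' hWfs
  have hU'open : IsOpen U' := hUopen.inter hWopen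
  have hV'open : IsOpen V' := hVopen.inter hWopen
  have hU'V' : Disjoint U' V' := hUV.mono Set.inter_subset_left Set.inter_subset_left
  have hclUV : Disjoint (closure U') (closure V') :=
    hFsp U' V' hU'open hV'open hU'fs hV'fs hU'V'
  -- every point of R in an open set O lies in the closure of O ∩ W
  have hmemcl : ∀ x ∈ R, ∀ O : Set X, IsOpen O → x ∈ O → x ∈ closure (O ∩ W) := by
    intro x hxR O hO hxO
    have hx2 : x ∈ K (n+1) := by
      rw [hReq, Set.mem_iInter] at hxR
      exact hxR (n+1)
    have hsub : F ⁻¹' Set.Ioc 0 (1/(((n+1:ℕ):ℝ)+1)) ⊆ W := by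
      intro y hy
      refine ⟨hy.1, lt_of_le_of_lt hy.2 ?_⟩
      rw [hrdef]
      apply one_div_lt_one_div_of_lt (by positivity)
      push_cast
      linarith
    rw [mem_closure_iff]
    intro o ho hxo
    have hx3 : x ∈ closure (F ⁻¹' Set.Ioc 0 (1/(((n+1:ℕ):ℝ)+1))) := hx2
    rw [mem_closure_iff] at hx3
    obtain ⟨y, hy⟩ := hx3 (o ∩ O) (ho.inter hO) ⟨hxo, hxO⟩
    exact ⟨y, hy.1.1, hy.1.2, hsub hy.2⟩
  have hAclU' : A ⊆ closure U' := fun x hx => hmemcl x hx.1 U hUopen (hAU hx)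
  have hBclV' : B ⊆ closure V' := fun x hx => hmemcl x hx.1 V hVopen (hBV hx)
  set ρ : unitInterval := ⟨r/2, by constructor <;> linarith⟩ with hρdef
  have hρcoe : (ρ:ℝ) = r/2 := rfl
  have hCW : ∀ s : unitInterval, 0 < s → C s ρ ⊆ W := by
    intro s hs x hx
    obtain ⟨h1, h2⟩ := hCsub s ρ hx
    have h1' : (s:ℝ) ≤ F x := Subtype.coe_le_coe.mpr h1
    have h2' : F x ≤ r/2 := Subtype.coe_le_coe.mpr h2
    have hs' : (0:ℝ) < s := Subtype.coe_lt_coe.mpr hs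
    exact ⟨lt_of_lt_of_le hs' h1', by linarith⟩
  have hside : ∀ s : unitInterval, 0 < s → s < ρ → C s ρ ⊆ U' ∨ C s ρ ⊆ V' := by
    intro s hs hsρ
    refine (hCconn s ρ hsρ).isPreconnected.subset_or_subset hU'open hV'open hU'V' ?_
    intro x hx
    have hxW : x ∈ W := hCW s hs hx
    rcases hWsub hxW with h | h
    · exact Or.inl ⟨h, hxW⟩
    · exact Or.inr ⟨h, hxW⟩
  have hsame : (∀ s : unitInterval, 0 < s → s < ρ → C s ρ ⊆ U') ∨
      (∀ s : unitInterval, 0 < s → s < ρ → C s ρ ⊆ V') := by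
    by_cases hall : ∀ s : unitInterval, 0 < s → s < ρ → C s ρ ⊆ U'
    · exact Or.inl hall
    · push_neg at hall
      obtain ⟨s₀, hs₀, hs₀ρ, hs₀U⟩ := hall
      have hs₀V : C s₀ ρ ⊆ V' := (hside s₀ hs₀ hs₀ρ).resolve_left hs₀U
      refine Or.inr fun s hs hsρ => ?_
      rcases hside s hs hsρ with h | h
      · exfalso
        set m : unitInterval := min s s₀ with hmdef
        have hm0 : 0 < m := lt_min hs hs₀
        have hmρ : m < ρ := lt_of_le_of_lt (min_le_left _ _) hsρ
        have hsub1 : C s ρ ⊆ C m ρ := hCmono s m ρ ρ (min_le_left _ _) le_rfl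
        have hsub2 : C s₀ ρ ⊆ C m ρ := hCmono s₀ m ρ ρ (min_le_right _ _) le_rfl
        rcases hside m hm0 hmρ with hmU | hmV
        · obtain ⟨x, hx⟩ := (hCconn s₀ ρ hs₀ρ).nonempty
          exact Set.disjoint_left.mp hU'V' (hmU (hsub2 hx)) (hs₀V hx)
        · obtain ⟨x, hx⟩ := (hCconn s ρ hsρ).nonempty
          exact Set.disjoint_left.mp hU'V' (h hx) (hmV (hsub1 hx))
      · exact h
  have hRsub : ∀ W' : Set X, (∀ s : unitInterval, 0 < s → s < ρ → C s ρ ⊆ W') →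
      R ⊆ closure W' := by
    intro W' hW' x hx
    have hρpos : (0:ℝ) < r/2 := by linarith
    obtain ⟨m, hm⟩ := exists_nat_one_div_lt hρpos
    have hx2 : x ∈ K m := by
      rw [hReq, Set.mem_iInter] at hx
      exact hx m
    refine closure_mono ?_ hx2
    intro y hy
    have hy0 : 0 < F y := hy.1
    have hy1 : F y < r/2 := lt_of_le_of_lt hy.2 hm
    set s : unitInterval := ⟨F y / 2, ⟨by linarith [hF0 y], by linarith [hF1 y]⟩⟩ with hsdef
    have hs0 : (0:unitInterval) < s := by
      rw [← Subtype.coe_lt_coe]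
      show (0:ℝ) < F y / 2
      linarith
    have hsρ : s < ρ := by
      rw [← Subtype.coe_lt_coe]
      show F y / 2 < r/2
      linarith
    apply hW' s hs0 hsρ
    apply hCmem
    · rw [← Subtype.coe_lt_coe]
      show F y / 2 < F y
      linarith
    · rw [← Subtype.coe_lt_coe]
      show F y < r/2
      exact hy1
  rcases hsame with hUc | hVc
  · obtain ⟨x, hxB⟩ := hBne
    exact Set.disjoint_left.mp hclUV (hRsub U' hUc hxB.1) (hBclV' hxB)
  · obtain ⟨x, hxA⟩ := hAne
    exact Set.disjoint_left.mp hclUV (hAclU' hxA) (hRsub V' hVc hxA.1)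

/-! ### Facts about `betaF`, `fu`, `Pset` -/

lemma continuous_betaF : Continuous betaF := by
  unfold betaF
  exact continuous_stoneCechExtend _

lemma continuous_betaPi : Continuous betaPi := by
  unfold betaPi
  exact continuous_stoneCechExtend _

lemma betaF_unit (p : bS) : betaF (stoneCechUnit p) = p.2.1 := by
  unfold betaF
  exact congrFun (stoneCechExtend_extends _) p

lemma betaPi_unit (p : bS) : betaPi (stoneCechUnit p) = stoneCechUnit p.1 := by
  unfold betaPi
  exact congrFun (stoneCechExtend_extends _) p

lemma betaF_mem_Icc_of_mem_closure {E : Set bS} {a b : ℝ}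
    (h : ∀ p : bS, p ∈ E → (p.2.1 : ℝ) ∈ Set.Icc a b) :
    ∀ z ∈ closure (stoneCechUnit '' E), ((betaF z : ℝ)) ∈ Set.Icc a b := by
  intro z hz
  have hcl : IsClosed ((fun w => ((betaF w : ℝ))) ⁻¹' Set.Icc a b) :=
    isClosed_Icc.preimage (continuous_subtype_val.comp continuous_betaF)
  refine hcl.closure_subset_iff.mpr ?_ hz
  rintro _ ⟨p, hp, rfl⟩
  simpa [betaF_unit] using h p hp

lemma fu_continuous (u : StoneCech ℕ) : Continuous (fu u) :=
  continuous_betaF.comp continuous_subtype_val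

lemma Pset_subset (u : StoneCech ℕ) (s r : unitInterval) :
    Pset u s r ⊆ fu u ⁻¹' Set.Icc s r := by
  intro z hz
  have h := betaF_mem_Icc_of_mem_closure (E := {p : bS | p.2.1 ∈ Set.Icc s r})
    (a := (s:ℝ)) (b := (r:ℝ))
    (fun p hp => ⟨Subtype.coe_le_coe.mpr hp.1, Subtype.coe_le_coe.mpr hp.2⟩) z.1 hz
  exact ⟨Subtype.coe_le_coe.mp h.1, Subtype.coe_le_coe.mp h.2⟩

lemma Pset_mono (u : StoneCech ℕ) (s s' r r' : unitInterval) (h1 : s' ≤ s) (h2 : r ≤ r') :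
    Pset u s r ⊆ Pset u s' r' :=
  Set.preimage_mono (closure_mono (Set.image_mono
    (fun p hp => ⟨h1.trans hp.1, hp.2.trans h2⟩)))

lemma mem_Pset_of_lt (u : StoneCech ℕ) (s r : unitInterval) (z : Su u)
    (h1 : s < fu u z) (h2 : fu u z < r) : z ∈ Pset u s r := by
  have hcover : z.1 ∈ closure (stoneCechUnit '' {p : bS | p.2.1 ≤ s}) ∪
      (closure (stoneCechUnit '' {p : bS | p.2.1 ∈ Set.Icc s r}) ∪
       closure (stoneCechUnit '' {p : bS | r ≤ p.2.1})) := by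
    have hsplit : Set.range (stoneCechUnit : bS → StoneCech bS) ⊆
        stoneCechUnit '' {p : bS | p.2.1 ≤ s} ∪
        (stoneCechUnit '' {p : bS | p.2.1 ∈ Set.Icc s r} ∪
         stoneCechUnit '' {p : bS | r ≤ p.2.1}) := by
      rintro _ ⟨p, rfl⟩
      rcases le_total p.2.1 s with h | h
      · exact Or.inl (Set.mem_image_of_mem _ h)
      · rcases le_total p.2.1 r with h' | h'
        · exact Or.inr (Or.inl (Set.mem_image_of_mem _ ⟨h, h'⟩))
        · exact Or.inr (Or.inr (Set.mem_image_of_mem _ h'))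
    have hcl := closure_mono hsplit
    rw [closure_union, closure_union] at hcl
    have hz : z.1 ∈ closure (Set.range (stoneCechUnit : bS → StoneCech bS)) := by
      rw [denseRange_stoneCechUnit.closure_range]
      trivial
    exact hcl hz
  rcases hcover with h | h | h
  · exfalso
    have hb := (betaF_mem_Icc_of_mem_closure (E := {p : bS | p.2.1 ≤ s})
      (a := 0) (b := (s:ℝ))
      (fun p hp => ⟨p.2.1.2.1, Subtype.coe_le_coe.mpr hp⟩) z.1 h).2
    have h1' : (s:ℝ) < ((fu u z : ℝ)) := Subtype.coe_lt_coe.mpr h1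
    exact absurd hb (not_le.mpr h1')
  · exact h
  · exfalso
    have hb := (betaF_mem_Icc_of_mem_closure (E := {p : bS | r ≤ p.2.1})
      (a := (r:ℝ)) (b := 1)
      (fun p hp => ⟨Subtype.coe_le_coe.mpr hp, p.2.1.2.2⟩) z.1 h).1
    have h2' : ((fu u z : ℝ)) < (r:ℝ) := Subtype.coe_lt_coe.mpr h2
    exact absurd hb (not_le.mpr h2')

lemma fu_surjective (u : StoneCech ℕ) : Function.Surjective (fu u) := by
  intro t
  have hg : Continuous (fun n : ℕ => stoneCechUnit (⟨n, t, 0⟩ : bS)) :=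
    continuous_of_discreteTopology
  set h : StoneCech ℕ → StoneCech bS := stoneCechExtend hg with hhdef
  have hhc : Continuous h := continuous_stoneCechExtend hg
  have e1 : ∀ n : ℕ, h (stoneCechUnit n) = stoneCechUnit (⟨n, t, 0⟩ : bS) :=
    fun n => congrFun (stoneCechExtend_extends hg) n
  have h1 : betaPi (h u) = u := by
    have heq : betaPi ∘ h = id := by
      refine Continuous.ext_on denseRange_stoneCechUnit
        (continuous_betaPi.comp hhc) continuous_id ?_
      rintro _ ⟨n, rfl⟩
      simp only [Function.comp_apply, id_eq, e1, betaPi_unit]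
    exact congrFun heq u
  have h2 : betaF (h u) = t := by
    have heq : betaF ∘ h = fun _ => t := by
      refine Continuous.ext_on denseRange_stoneCechUnit
        (continuous_betaF.comp hhc) continuous_const ?_
      rintro _ ⟨n, rfl⟩
      simp only [Function.comp_apply, e1, betaF_unit]
    exact congrFun heq u
  exact ⟨⟨h u, h1⟩, h2⟩

/-- `R_0` equals the frontier of `f_u⁻¹(0)` in `S_u` and is connected; likewise `L_1`
equals the frontier of `f_u⁻¹(1)` in `S_u` and is connected. -/
theorem Rzero_Lone_frontier_connected (u : StoneCech ℕ)
    (hu : ∀ n : ℕ, u ≠ stoneCechUnit n)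
    (hne : (Su u).Nonempty) (hcomp : IsCompact (Su u)) (hconn : IsConnected (Su u))
    (hFsp : IsFSpace (Su u))
    (hP : ∀ s r : unitInterval, s < r → IsConnected (Pset u s r)) :
    Rset u 0 = frontier (fu u ⁻¹' {(0 : unitInterval)}) ∧ IsConnected (Rset u 0) ∧
    Lset u 1 = frontier (fu u ⁻¹' {(1 : unitInterval)}) ∧ IsConnected (Lset u 1) := by
  haveI hcs : CompactSpace (Su u) := isCompact_iff_compactSpace.mp hcomp
  have hfc : Continuous (fu u) := fu_continuous u
  have hsurj : Function.Surjective (fu u) := fu_surjective u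
  -- frontier identities
  have hIoc : ({(0:unitInterval)} : Set unitInterval)ᶜ = Set.Ioc 0 1 := by
    ext t
    constructor
    · intro h
      refine ⟨?_, Subtype.coe_le_coe.mp t.2.2⟩
      rw [← Subtype.coe_lt_coe]
      rcases lt_or_eq_of_le t.2.1 with h' | h'
      · exact h'
      · exact absurd (Subtype.ext h'.symm) h
    · rintro ⟨h1, _⟩ h2
      rw [h2] at h1
      exact lt_irrefl _ h1
  have hIco : ({(1:unitInterval)} : Set unitInterval)ᶜ = Set.Ico 0 1 := by
    ext t
    constructor
    · intro h
      refine ⟨Subtype.coe_le_coe.mp t.2.1, ?_⟩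
      rw [← Subtype.coe_lt_coe]
      rcases lt_or_eq_of_le t.2.2 with h' | h'
      · exact h'
      · exact absurd (Subtype.ext h') h
    · rintro ⟨_, h1⟩ h2
      rw [h2] at h1
      exact lt_irrefl _ h1
  have hcompl0 : (fu u ⁻¹' {(0 : unitInterval)})ᶜ = fu u ⁻¹' Set.Ioc 0 1 := by
    rw [← Set.preimage_compl, hIoc]
  have hcompl1 : (fu u ⁻¹' {(1 : unitInterval)})ᶜ = fu u ⁻¹' Set.Ico 0 1 := by
    rw [← Set.preimage_compl, hIco]
  have hfr0 : Rset u 0 = frontier (fu u ⁻¹' {(0 : unitInterval)}) := by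
    have hcl : IsClosed (fu u ⁻¹' {(0 : unitInterval)}) := isClosed_singleton.preimage hfc
    rw [frontier_eq_closure_inter_closure, hcl.closure_eq, hcompl0]
    rfl
  have hfr1 : Lset u 1 = frontier (fu u ⁻¹' {(1 : unitInterval)}) := by
    have hcl : IsClosed (fu u ⁻¹' {(1 : unitInterval)}) := isClosed_singleton.preimage hfc
    rw [frontier_eq_closure_inter_closure, hcl.closure_eq, hcompl1]
    rfl
  -- connectedness of R_0
  have hconnR : IsConnected (Rset u 0) := by
    have := key_conn hFsp (fu u) hfc hsurj (Pset u) hP (Pset_subset u) (Pset_mono u)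
      (fun s r z h1 h2 => mem_Pset_of_lt u s r z h1 h2)
    exact this
  -- connectedness of L_1 via the symmetry t ↦ 1 - t
  have hconnL : IsConnected (Lset u 1) := by
    have hσlt : ∀ {a b : unitInterval}, a < b →
        unitInterval.symm b < unitInterval.symm a := by
      intro a b h
      rw [← Subtype.coe_lt_coe] at h ⊢
      rw [unitInterval.coe_symm_eq, unitInterval.coe_symm_eq]
      linarith
    have hσle : ∀ {a b : unitInterval}, a ≤ b →
        unitInterval.symm b ≤ unitInterval.symm a := by
      intro a b h
      rw [← Subtype.coe_le_coe] at h ⊢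
      rw [unitInterval.coe_symm_eq, unitInterval.coe_symm_eq]
      linarith
    have hsurj' : Function.Surjective (unitInterval.symm ∘ fu u) := by
      intro t
      obtain ⟨x, hx⟩ := hsurj (unitInterval.symm t)
      refine ⟨x, ?_⟩
      show unitInterval.symm (fu u x) = t
      rw [hx, unitInterval.symm_symm]
    have hkey := key_conn hFsp (unitInterval.symm ∘ fu u)
      (unitInterval.continuous_symm.comp hfc) hsurj'
      (fun s r => Pset u (unitInterval.symm r) (unitInterval.symm s))
      (fun s r h => hP (unitInterval.symm r) (unitInterval.symm s) (hσlt h))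
      (fun s r z hz => by
        obtain ⟨h1, h2⟩ := Pset_subset u (unitInterval.symm r) (unitInterval.symm s) hz
        have h1' := hσle h1
        have h2' := hσle h2
        rw [unitInterval.symm_symm] at h1' h2'
        exact ⟨h2', h1'⟩)
      (fun s s' r r' h1 h2 =>
        Pset_mono u (unitInterval.symm r) (unitInterval.symm r')
          (unitInterval.symm s) (unitInterval.symm s') (hσle h2) (hσle h1))
      (fun s r z h1 h2 => by
        have h1' : s < unitInterval.symm (fu u z) := h1
        have h2' : unitInterval.symm (fu u z) < r := h2
        have h3 := hσlt h1'
        have h4 := hσlt h2'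
        rw [unitInterval.symm_symm] at h3 h4
        exact mem_Pset_of_lt u (unitInterval.symm r) (unitInterval.symm s) z h4 h3)
    have e1 : (unitInterval.symm ∘ fu u) ⁻¹' {(0 : unitInterval)} =
        fu u ⁻¹' {(1 : unitInterval)} := by
      ext z
      simp only [Set.mem_preimage, Function.comp_apply, Set.mem_singleton_iff]
      constructor
      · intro h
        have h' : ((unitInterval.symm (fu u z)) : ℝ) = 0 := congrArg Subtype.val h
        rw [unitInterval.coe_symm_eq] at h'
        apply Subtype.ext
        show ((fu u z : ℝ)) = 1
        linarith
      · intro h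
        apply Subtype.ext
        show ((unitInterval.symm (fu u z)) : ℝ) = 0
        rw [unitInterval.coe_symm_eq, h]
        norm_num
    have e2 : (unitInterval.symm ∘ fu u) ⁻¹' Set.Ioc 0 1 = fu u ⁻¹' Set.Ico 0 1 := by
      ext z
      simp only [Set.mem_preimage, Function.comp_apply, Set.mem_Ioc, Set.mem_Ico]
      constructor
      · rintro ⟨h1, _⟩
        have h1' : (0:ℝ) < ((unitInterval.symm (fu u z)) : ℝ) := Subtype.coe_lt_coe.mpr h1
        rw [unitInterval.coe_symm_eq] at h1'
        refine ⟨?_, ?_⟩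
        · rw [← Subtype.coe_le_coe]
          exact (fu u z).2.1
        · rw [← Subtype.coe_lt_coe]
          show ((fu u z : ℝ)) < 1
          linarith
      · rintro ⟨_, h2⟩
        have h2' : ((fu u z : ℝ)) < 1 := Subtype.coe_lt_coe.mpr h2
        refine ⟨?_, ?_⟩
        · rw [← Subtype.coe_lt_coe]
          show (0:ℝ) < ((unitInterval.symm (fu u z)) : ℝ)
          rw [unitInterval.coe_symm_eq]
          linarith
        · rw [← Subtype.coe_le_coe]
          show ((unitInterval.symm (fu u z)) : ℝ) ≤ 1
          rw [unitInterval.coe_symm_eq]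
          linarith [(fu u z).2.1]
    rw [e1, e2] at hkey
    exact hkey
  exact ⟨hfr0, hconnR, hfr1, hconnL⟩

end
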